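/- Let G be a finite group, C a cyclic normal subgroup, and M a homogeneous G-lattice. If H²(C, M) ≠ 0, then C acts trivially on ℚ ⊗ M; in particular, if M is a faithful G-module then C is trivial. -/

import Mathlib

open scoped TensorProduct

/-- Extension of scalars of an integral representation. -/
noncomputable def extScalars (A : Type*) [CommRing A] {G M : Type*} [Group G]
    [AddCommGroup M] [Module ℤ M] (ρ : Representation ℤ G M) :
    Representation A G (A ⊗[ℤ] M) :=
  (Module.End.baseChangeHom ℤ A M).toMonoidHom.comp ρ

/-- A `G`-stable submodule of a representation. -/
def StableSub {k G V : Type*} [CommRing k] [Group G] [AddCommGroup V] [Module k V]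
    (σ : Representation k G V) (W : Submodule k V) : Prop :=
  ∀ (g : G) (x : V), x ∈ W → σ g x ∈ W

/-- `W` is an irreducible subrepresentation. -/
def IsSimpleSub {k G V : Type*} [CommRing k] [Group G] [AddCommGroup V] [Module k V]
    (σ : Representation k G V) (W : Submodule k V) : Prop :=
  W ≠ ⊥ ∧ StableSub σ W ∧ ∀ W' ≤ W, StableSub σ W' → W' = ⊥ ∨ W' = W

/-- `M` is a homogeneous `G`-lattice. -/
def Homogeneous {G M : Type*} [Group G] [AddCommGroup M] [Module ℤ M]
    (ρ : Representation ℤ G M) : Prop :=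
  ∀ (W₁ W₂ : Submodule ℚ (ℚ ⊗[ℤ] M))
    (h₁ : IsSimpleSub (extScalars ℚ ρ) W₁) (_h₂ : IsSimpleSub (extScalars ℚ ρ) W₂),
    ∃ e : W₁ ≃ₗ[ℚ] W₂, ∀ (g : G) (x : ℚ ⊗[ℤ] M) (hx : x ∈ W₁),
      (e ⟨extScalars ℚ ρ g x, h₁.2.1 g x hx⟩ : ℚ ⊗[ℤ] M) =
        extScalars ℚ ρ g (e ⟨x, hx⟩ : W₂)

lemma extScalars_tmul {A : Type*} [CommRing A] [Algebra ℤ A] {G M : Type*} [Group G]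
    [AddCommGroup M] [Module ℤ M] (ρ : Representation ℤ G M) (g : G) (a : A) (m : M) :
    extScalars A ρ g (a ⊗ₜ[ℤ] m) = a ⊗ₜ[ℤ] (ρ g m) := by
  obtain rfl : ‹Algebra ℤ A› = Ring.toIntAlgebra A := Subsingleton.elim _ _
  simp [extScalars, Module.End.baseChangeHom]
  rfl

lemma tmul_one_eq_zero {M : Type*} [AddCommGroup M] [Module ℤ M] [Module.Free ℤ M]
    {m : M} (h : (1:ℚ) ⊗ₜ[ℤ] m = 0) : m = 0 := by
  classical
  let b := Module.Free.chooseBasis ℤ M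
  let B := Algebra.TensorProduct.basis ℚ b
  have h2 : B.repr ((1:ℚ) ⊗ₜ[ℤ] m) = 0 := by rw [h, map_zero]
  rw [Algebra.TensorProduct.basis_repr_tmul] at h2
  have h3 : ∀ i, (b.repr m i : ℚ) = 0 := by
    intro i
    have := DFunLike.congr_fun h2 i
    simpa using this
  have h4 : b.repr m = 0 := by
    ext i
    exact_mod_cast h3 i
  simpa using congrArg (b.repr.symm) h4

lemma exists_equivariant_proj {G V : Type*} [Group G] [Finite G] [AddCommGroup V]
    [Module ℚ V] (σ : Representation ℚ G V) (W : Submodule ℚ V) (hW : StableSub σ W) :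
    ∃ q : V →ₗ[ℚ] V, (∀ x, q x ∈ W) ∧ (∀ x ∈ W, q x = x) ∧
      (∀ (g : G) (x : V), q (σ g x) = σ g (q x)) := by
  classical
  cases nonempty_fintype G
  obtain ⟨U', hU'⟩ := Submodule.exists_isCompl W
  set p : V →ₗ[ℚ] V := W.subtype ∘ₗ (W.projectionOnto U' hU') with hp
  have hpW : ∀ x, p x ∈ W := fun x => (W.projectionOnto U' hU' x).2
  have hpid : ∀ x ∈ W, p x = x := by
    intro x hx
    have := Submodule.projectionOnto_apply_left hU' ⟨x, hx⟩
    simp only [hp, LinearMap.comp_apply]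
    rw [this]
    rfl
  set c : ℚ := (Fintype.card G : ℚ)⁻¹ with hc
  refine ⟨c • ∑ g : G, (σ g) ∘ₗ p ∘ₗ (σ g⁻¹), ?_, ?_, ?_⟩
  · intro x
    simp only [LinearMap.smul_apply, LinearMap.sum_apply, LinearMap.comp_apply]
    exact Submodule.smul_mem _ _ (Submodule.sum_mem _ fun g _ => hW g _ (hpW _))
  · intro x hx
    have hterm : ∀ g : G, σ g (p (σ g⁻¹ x)) = x := by
      intro g
      rw [hpid _ (hW g⁻¹ x hx)]
      have h1 : σ g * σ g⁻¹ = 1 := by rw [← map_mul, mul_inv_cancel, map_one]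
      calc σ g (σ g⁻¹ x) = (σ g * σ g⁻¹) x := rfl
        _ = x := by rw [h1]; rfl
    simp only [LinearMap.smul_apply, LinearMap.sum_apply, LinearMap.comp_apply, hterm,
      Finset.sum_const, Finset.card_univ, ← Nat.cast_smul_eq_nsmul ℚ]
    rw [hc, smul_smul, inv_mul_cancel₀, one_smul]
    exact_mod_cast Fintype.card_ne_zero
  · intro h x
    simp only [LinearMap.smul_apply, LinearMap.sum_apply, LinearMap.comp_apply, map_smul,
      map_sum]
    congr 1
    refine (Fintype.sum_equiv (Equiv.mulLeft h) _ _ fun g => ?_).symm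
    simp only [Equiv.coe_mulLeft]
    have h1 : σ (h * g)⁻¹ (σ h x) = σ g⁻¹ x := by
      calc σ (h*g)⁻¹ (σ h x) = (σ (h*g)⁻¹ * σ h) x := rfl
        _ = σ ((h*g)⁻¹ * h) x := by rw [← map_mul]
        _ = σ g⁻¹ x := by rw [mul_inv_rev, inv_mul_cancel_right]
    rw [h1]
    calc σ h ((σ g) (p (σ g⁻¹ x))) = (σ h * σ g) (p (σ g⁻¹ x)) := rfl
      _ = σ (h * g) (p (σ g⁻¹ x)) := by rw [map_mul]

lemma exists_simple_sub {G V : Type*} [Group G] [AddCommGroup V] [Module ℚ V]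
    [FiniteDimensional ℚ V] (σ : Representation ℚ G V) (X : Submodule ℚ V)
    (hX : StableSub σ X) (hXne : X ≠ ⊥) :
    ∃ W, W ≤ X ∧ IsSimpleSub σ W := by
  classical
  set S : Set ℕ := {d | ∃ W : Submodule ℚ V, W ≤ X ∧ StableSub σ W ∧ W ≠ ⊥ ∧
    Module.finrank ℚ W = d} with hS
  have hSne : S.Nonempty := ⟨_, X, le_rfl, hX, hXne, rfl⟩
  obtain ⟨W, hWX, hWst, hWne, hWd⟩ := Nat.sInf_mem hSne
  refine ⟨W, hWX, hWne, hWst, fun W' hW'le hW'st => ?_⟩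
  by_cases hW'ne : W' = ⊥
  · exact Or.inl hW'ne
  · right
    have hmem : Module.finrank ℚ W' ∈ S := ⟨W', hW'le.trans hWX, hW'st, hW'ne, rfl⟩
    have h1 : sInf S ≤ Module.finrank ℚ W' := Nat.sInf_le hmem
    exact Submodule.eq_of_le_of_finrank_le hW'le (hWd ▸ h1)

open groupCohomology in
lemma h2_subsingleton_of_no_invariants {H : Type} [Group H] [Finite H] [IsCyclic H]
    (A : Rep ℤ H) (hfix : ∀ a : A, (∀ h : H, A.ρ h a = a) → a = 0) :
    Subsingleton (groupCohomology.H2 A) := by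
  classical
  obtain ⟨s, hs⟩ := IsCyclic.exists_generator (α := H)
  set n := orderOf s with hn
  have hsurj : ∀ x : H, ∃ k : ℕ, s ^ k = x := fun x => by
    obtain ⟨k, hk⟩ := (mem_powers_iff_mem_zpowers).2 (hs x)
    exact ⟨k, hk⟩
  choose log hlog using hsurj
  suffices key : ∀ f : ↥(cocycles₂ A), ⇑f ∈ coboundaries₂ A by
    refine ⟨fun x y => ?_⟩
    induction x using H2_induction_on with | h a => ?_
    induction y using H2_induction_on with | h b => ?_
    exact (H2π_eq_iff (A := A) a b).2 (sub_mem (key a) (key b))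
  intro f
  set F : ℕ → A := fun k => ∑ i ∈ Finset.range k, (f (s ^ i, s) : A) with hF
  have hFs : ∀ k : ℕ, F (k+1) = F k + f (s^k, s) := fun k => Finset.sum_range_succ _ k
  have hcoc : ∀ g h j : H, (f (g*h, j) : A) + f (g, h) = A.ρ g (f (h, j)) + f (g, h*j) :=
    (mem_cocycles₂_iff (f : H × H → A)).1 f.2
  have L1 : ∀ b a : ℕ, (f (s^a, s^b) : A) =
      F (a+b) - F a - A.ρ (s^a) (F b) + A.ρ (s^a) (f (1,1)) := by
    intro b
    induction b with
    | zero =>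
      intro a
      rw [pow_zero, cocycles₂_map_one_snd]
      simp [hF]
    | succ b ih =>
      intro a
      have hid := hcoc (s^a) (s^b) s
      rw [← pow_add, ← pow_succ] at hid
      have hstep : (f (s^a, s^(b+1)) : A) =
          f (s^(a+b), s) + f (s^a, s^b) - A.ρ (s^a) (f (s^b, s)) := by
        rw [← sub_eq_iff_eq_add'.2 hid]
      rw [hstep, ih a, show a + (b+1) = (a+b)+1 from rfl, hFs (a+b), hFs b, map_add]
      abel
  have hFn : ∀ a : ℕ, F (a + n) - F a = A.ρ (s^a) (F n) := by
    intro a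
    have h1 := L1 n a
    rw [pow_orderOf_eq_one, cocycles₂_map_one_snd] at h1
    have h2 := add_eq_right.1 h1.symm
    exact sub_eq_zero.1 (by rw [← h2])
  have hFn2 : ∀ a : ℕ, F (a + n) = F a + F n := by
    intro a
    induction a with
    | zero => simp [hF]
    | succ a ih =>
      have h1 : (a+1) + n = (a+n)+1 := by omega
      rw [h1, hFs (a+n), hFs a, ih]
      have h2 : (s : H) ^ (a+n) = s ^ a := by rw [pow_add, pow_orderOf_eq_one, mul_one]
      rw [h2]
      abel
  have hinv : ∀ a : ℕ, A.ρ (s^a) (F n) = F n := by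
    intro a
    rw [← hFn a, hFn2 a]
    abel
  have hN0 : F n = 0 := hfix _ (fun h => by rw [← hlog h]; exact hinv (log h))
  have hper : ∀ a : ℕ, F (a + n) = F a := fun a => by rw [hFn2, hN0, add_zero]
  have hmul : ∀ (t a : ℕ), F (a + n * t) = F a := by
    intro t
    induction t with
    | zero => simp
    | succ t ih =>
      intro a
      have h1 : a + n * (t+1) = (a + n * t) + n := by ring
      rw [h1, hper, ih]
  have hmod : ∀ a : ℕ, F a = F (a % n) := by
    intro a
    conv_lhs => rw [← Nat.mod_add_div a n]
    exact hmul (a/n) (a%n)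
  have hcong : ∀ a b : ℕ, (s:H) ^ a = s ^ b → F a = F b := by
    intro a b hab
    have hm : a % n = b % n := pow_eq_pow_iff_modEq.1 hab
    rw [hmod a, hmod b, hm]
  set φ : H → A := fun x => A.ρ x (f (1,1)) - F (log x) with hφ
  refine ⟨φ, funext fun gh => ?_⟩
  obtain ⟨g, h⟩ := gh
  show A.ρ g (φ h) - φ (g * h) + φ g = f (g, h)
  have hFab : F (log g + log h) = F (log (g*h)) := by
    apply hcong
    rw [pow_add, hlog, hlog, hlog]
  have hL := L1 (log h) (log g)
  rw [hlog, hlog] at hL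
  have hgh : A.ρ g (A.ρ h (f (1,1))) = A.ρ (g*h) (f (1,1)) := by
    rw [map_mul]
    rfl
  rw [hL, hFab]
  simp only [hφ, map_sub]
  rw [hgh]
  abel

/-- Let `G` be a finite group, `C` a cyclic normal subgroup, and `M` a
homogeneous `G`-lattice.  If `H²(C, M) ≠ 0`, then `C` acts trivially on `ℚ ⊗ M`;
in particular, if `M` is a faithful `G`-module then `C` is trivial. -/
theorem stmt_6 {G M : Type} [Group G] [Finite G] [AddCommGroup M] [Module ℤ M]
    [Module.Free ℤ M] [Module.Finite ℤ M] (ρ : Representation ℤ G M)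
    (hhom : Homogeneous ρ) (C : Subgroup G) (hC : C.Normal) (hCcyc : IsCyclic C)
    (hH2 : Nontrivial (groupCohomology.H2 (Rep.of (ρ.comp C.subtype)))) :
    (∀ c ∈ C, ∀ x : ℚ ⊗[ℤ] M, extScalars ℚ ρ c x = x) ∧
      (Function.Injective ρ → C = ⊥) := by
  classical
  haveI := hCcyc
  let VC : Submodule ℚ (ℚ ⊗[ℤ] M) :=
    ⨅ c : C, LinearMap.ker (extScalars ℚ ρ (c : G) - LinearMap.id)
  have hmemVC : ∀ x : ℚ ⊗[ℤ] M, x ∈ VC ↔ ∀ c : C, extScalars ℚ ρ (c : G) x = x := by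
    intro x
    simp only [VC, Submodule.mem_iInf, LinearMap.mem_ker, LinearMap.sub_apply,
      LinearMap.id_apply, sub_eq_zero]
  have hVCst : StableSub (extScalars ℚ ρ) VC := by
    intro g x hx
    rw [hmemVC] at hx ⊢
    intro c
    have hd : (g⁻¹ * (c : G) * g) ∈ C := by
      have := hC.conj_mem (c : G) c.2 g⁻¹
      rwa [inv_inv] at this
    have h1 : (c : G) * g = g * (g⁻¹ * (c : G) * g) := by group
    calc extScalars ℚ ρ (c:G) (extScalars ℚ ρ g x)
        = extScalars ℚ ρ ((c:G) * g) x := by rw [map_mul]; rfl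
      _ = extScalars ℚ ρ (g * (g⁻¹ * (c:G) * g)) x := by rw [h1]
      _ = extScalars ℚ ρ g (extScalars ℚ ρ (g⁻¹ * (c:G) * g) x) := by rw [map_mul]; rfl
      _ = extScalars ℚ ρ g x := by rw [hx ⟨_, hd⟩]
  have hVCtop : VC = ⊤ := by
    by_contra hne
    obtain ⟨q, hq1, hq2, hq3⟩ := exists_equivariant_proj (extScalars ℚ ρ) VC hVCst
    set U := LinearMap.ker q with hU
    have hUst : StableSub (extScalars ℚ ρ) U := by
      intro g x hx
      rw [LinearMap.mem_ker] at hx ⊢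
      rw [hq3, hx, map_zero]
    have hUVC : ∀ x, x ∈ U → x ∈ VC → x = 0 := by
      intro x hx hxc
      have h1 := hq2 x hxc
      rw [LinearMap.mem_ker.1 hx] at h1
      exact h1.symm
    have hUne : U ≠ ⊥ := by
      obtain ⟨x, hx⟩ : ∃ x, x ∉ VC := by
        by_contra h
        push_neg at h
        exact hne (Submodule.eq_top_iff'.2 h)
      intro hbot
      have hxq : x - q x ∈ U := by
        rw [LinearMap.mem_ker, map_sub, hq2 _ (hq1 x), sub_self]
      rw [hbot, Submodule.mem_bot] at hxq
      have h2 : x = q x := by rwa [sub_eq_zero] at hxq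
      exact hx (h2 ▸ hq1 x)
    by_cases hVC0 : VC = ⊥
    · have hfix : ∀ m : M, (∀ c : C, ρ (c:G) m = m) → m = 0 := by
        intro m hm
        have h1 : (1:ℚ) ⊗ₜ[ℤ] m ∈ VC := by
          rw [hmemVC]
          intro c
          rw [extScalars_tmul, hm c]
        rw [hVC0, Submodule.mem_bot] at h1
        exact tmul_one_eq_zero h1
      have hsub : Subsingleton (groupCohomology.H2 (Rep.of (ρ.comp C.subtype))) := by
        apply h2_subsingleton_of_no_invariants
        intro a ha
        exact hfix a (fun c => ha c)
      exact (not_nontrivial_iff_subsingleton.2 hsub) hH2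
    · obtain ⟨W₀, hW₀le, hW₀⟩ := exists_simple_sub (extScalars ℚ ρ) VC hVCst hVC0
      obtain ⟨W₁, hW₁le, hW₁⟩ := exists_simple_sub (extScalars ℚ ρ) U hUst hUne
      obtain ⟨e, he⟩ := hhom W₀ W₁ hW₀ hW₁
      have hW0bot : W₀ = ⊥ := by
        rw [Submodule.eq_bot_iff]
        intro x hx
        have hxfix : ∀ c : C, extScalars ℚ ρ (c:G) x = x := (hmemVC x).1 (hW₀le hx)
        have h1 : ∀ c : C,
            extScalars ℚ ρ (c:G) ((e ⟨x, hx⟩ : W₁) : ℚ ⊗[ℤ] M)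
              = ((e ⟨x, hx⟩ : W₁) : ℚ ⊗[ℤ] M) := by
          intro c
          have h2 := he (c:G) x hx
          have h3 : (⟨extScalars ℚ ρ (c:G) x, hW₀.2.1 (c:G) x hx⟩ : W₀) = ⟨x, hx⟩ :=
            Subtype.ext (hxfix c)
          rw [h3] at h2
          exact h2.symm
        have h4 : ((e ⟨x, hx⟩ : W₁) : ℚ ⊗[ℤ] M) ∈ VC := (hmemVC _).2 h1
        have h5 := hUVC _ (hW₁le (e ⟨x, hx⟩).2) h4
        have h6 : e ⟨x, hx⟩ = 0 := Subtype.ext h5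
        have h7 : (⟨x, hx⟩ : W₀) = 0 := by
          apply e.injective
          rw [h6, map_zero]
        exact congrArg Subtype.val h7
      exact hW₀.1 hW0bot
  have part1 : ∀ c ∈ C, ∀ x : ℚ ⊗[ℤ] M, extScalars ℚ ρ c x = x := by
    intro c hc x
    have hx : x ∈ VC := hVCtop ▸ Submodule.mem_top
    exact (hmemVC x).1 hx ⟨c, hc⟩
  refine ⟨part1, fun hinj => ?_⟩
  rw [Subgroup.eq_bot_iff_forall]
  intro c hc
  have h1 : ρ c = 1 := by
    apply LinearMap.ext
    intro m
    have h2 : (1:ℚ) ⊗ₜ[ℤ] (ρ c m) = (1:ℚ) ⊗ₜ[ℤ] m := by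
      rw [← extScalars_tmul]
      exact part1 c hc _
    have h3 : (1:ℚ) ⊗ₜ[ℤ] (ρ c m - m) = 0 := by
      rw [TensorProduct.tmul_sub, h2, sub_self]
    have h4 := tmul_one_eq_zero h3
    rw [Module.End.one_apply]
    exact sub_eq_zero.1 h4
  exact hinj (h1.trans (map_one ρ).symm)
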